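/- Let r > 0 be a real number and set a_n = exp(n^r) for n ≥ 1. Then the sequence (a_n) is slowly increasing, i.e. (∑_{k=1}^n a_k²)/(∑_{k=1}^n a_k)² → 0 as n → ∞, if and only if r < 1. -/

import Mathlib

open Filter

/-- The sequence `a_n = exp(n^r)`. -/
noncomputable def aSeq12 (r : ℝ) (k : ℕ) : ℝ := Real.exp ((k : ℝ) ^ r)

/-- Partial sums of `aSeq12`. -/
noncomputable def Ssum12 (r : ℝ) (n : ℕ) : ℝ := ∑ k ∈ Finset.Icc 1 n, aSeq12 r k

/-- Partial sums of squares. -/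
noncomputable def Qsum12 (r : ℝ) (n : ℕ) : ℝ := ∑ k ∈ Finset.Icc 1 n, (aSeq12 r k) ^ 2

lemma geom_bound12 {q : ℝ} (h0 : 0 ≤ q) (h1 : q < 1) (n : ℕ) :
    ∑ i ∈ Finset.range n, q ^ i ≤ (1 - q)⁻¹ := by
  have hq : (0:ℝ) < 1 - q := by linarith
  rw [geom_sum_eq (ne_of_lt h1), div_le_iff_of_neg (by linarith : q - 1 < 0)]
  have h2 : (1 - q)⁻¹ * (q - 1) = -1 := by field_simp; ring
  rw [h2]
  have : (0:ℝ) ≤ q ^ n := pow_nonneg h0 n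
  linarith

/-- For `r ≥ 1`: `k^r + (n-k) ≤ n^r` for `1 ≤ k ≤ n`. -/
lemma key_ge12 {r : ℝ} (hr : 1 ≤ r) (k n : ℕ) (hk : 1 ≤ k) (hkn : k ≤ n) :
    (k:ℝ) ^ r + ((n - k : ℕ) : ℝ) ≤ (n:ℝ) ^ r := by
  have hk0 : (0:ℝ) < k := by exact_mod_cast hk
  set s : ℝ := ((n - k : ℕ) : ℝ) / k with hs
  have hs0 : 0 ≤ s := by positivity
  have hn : (n:ℝ) = k * (1 + s) := by rw [hs, Nat.cast_sub hkn]; field_simp; ring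
  have hb : 1 + r * s ≤ (1 + s) ^ r :=
    one_add_mul_self_le_rpow_one_add (by linarith) hr
  have h1 : (n:ℝ) ^ r = (k:ℝ) ^ r * (1 + s) ^ r := by
    rw [hn, Real.mul_rpow (le_of_lt hk0) (by linarith)]
  have hkr1 : (1:ℝ) ≤ (k:ℝ) ^ (r - 1) := Real.one_le_rpow (by exact_mod_cast hk) (by linarith)
  have hkr : (k:ℝ) ^ r * s = ((n - k : ℕ):ℝ) * (k:ℝ) ^ (r - 1) := by
    rw [hs, Real.rpow_sub hk0, Real.rpow_one]
    field_simp
  have hmain : (k:ℝ) ^ r + ((n-k:ℕ):ℝ) ≤ (k:ℝ) ^ r * (1 + r * s) := by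
    have h2 : ((n-k:ℕ):ℝ) * 1 ≤ ((n-k:ℕ):ℝ) * ((k:ℝ)^(r-1) * r) := by
      apply mul_le_mul_of_nonneg_left _ (by positivity)
      nlinarith
    calc (k:ℝ) ^ r + ((n-k:ℕ):ℝ) ≤ (k:ℝ)^r + ((n-k:ℕ):ℝ) * ((k:ℝ)^(r-1)*r) := by linarith
    _ = (k:ℝ) ^ r * (1 + r * s) := by
        rw [mul_add, mul_one, show (k:ℝ)^r*(r*s) = ((k:ℝ)^r*s)*r by ring, hkr]; ring
  calc (k:ℝ) ^ r + ((n-k:ℕ):ℝ) ≤ (k:ℝ)^r * (1 + r*s) := hmain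
  _ ≤ (k:ℝ)^r * (1+s)^r := mul_le_mul_of_nonneg_left hb (by positivity)
  _ = (n:ℝ)^r := h1.symm

/-- For `0 < r < 1`: `n^r ≤ k^r + r·(n-k)·k^(r-1)` for `1 ≤ k ≤ n`. -/
lemma key_lt12 {r : ℝ} (hr : 0 < r) (hr1 : r < 1) (k n : ℕ) (hk : 1 ≤ k) (hkn : k ≤ n) :
    (n:ℝ) ^ r ≤ (k:ℝ) ^ r + r * ((n - k : ℕ) : ℝ) * (k:ℝ) ^ (r - 1) := by
  have hk0 : (0:ℝ) < k := by exact_mod_cast hk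
  set s : ℝ := ((n - k : ℕ) : ℝ) / k with hs
  have hs0 : 0 ≤ s := by positivity
  have hn : (n:ℝ) = k * (1 + s) := by rw [hs, Nat.cast_sub hkn]; field_simp; ring
  have hb : (1 + s) ^ r ≤ 1 + r * s :=
    rpow_one_add_le_one_add_mul_self (by linarith) hr.le hr1.le
  have hkr : (k:ℝ) ^ r * s = ((n - k : ℕ):ℝ) * (k:ℝ) ^ (r - 1) := by
    rw [hs, Real.rpow_sub hk0, Real.rpow_one]
    field_simp
  calc (n:ℝ) ^ r = (k:ℝ) ^ r * (1 + s) ^ r := by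
        rw [hn, Real.mul_rpow (le_of_lt hk0) (by linarith)]
  _ ≤ (k:ℝ) ^ r * (1 + r * s) := mul_le_mul_of_nonneg_left hb (by positivity)
  _ = (k:ℝ) ^ r + r * ((n-k:ℕ):ℝ) * (k:ℝ) ^ (r-1) := by
        rw [mul_add, mul_one, show (k:ℝ)^r*(r*s) = ((k:ℝ)^r*s)*r by ring, hkr]; ring

/-- For `r ≥ 1`, the partial sums are dominated by the last term. -/
lemma Sle12 {r : ℝ} (hr : 1 ≤ r) (n : ℕ) (hn : 1 ≤ n) :
    Ssum12 r n ≤ (1 - Real.exp (-1))⁻¹ * aSeq12 r n := by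
  set q : ℝ := Real.exp (-1) with hq
  have hq0 : 0 < q := Real.exp_pos _
  have hq1 : q < 1 := by
    rw [hq, show (1:ℝ) = Real.exp 0 by simp]
    exact Real.exp_lt_exp.2 (by norm_num)
  have step : ∀ k ∈ Finset.Icc 1 n, aSeq12 r k ≤ aSeq12 r n * q ^ (n - k) := by
    intro k hk
    rw [Finset.mem_Icc] at hk
    have key := key_ge12 hr k n hk.1 hk.2
    have e2 : aSeq12 r n * q ^ (n-k) = Real.exp ((n:ℝ)^r + ((n-k:ℕ):ℝ) * (-1)) := by
      rw [hq, ← Real.exp_nat_mul, aSeq12, ← Real.exp_add]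
    rw [e2, aSeq12]
    apply Real.exp_le_exp.2
    nlinarith
  have hsum : Ssum12 r n ≤ ∑ k ∈ Finset.Icc 1 n, aSeq12 r n * q ^ (n - k) :=
    Finset.sum_le_sum step
  have hre : ∑ k ∈ Finset.Icc 1 n, q ^ (n - k) = ∑ i ∈ Finset.range n, q ^ i := by
    rw [← Finset.Ico_add_one_right_eq_Icc, Finset.sum_Ico_eq_sum_range]
    simp only [Nat.add_sub_cancel_left, Nat.succ_sub_one, Nat.add_sub_cancel]
    rw [← Finset.sum_range_reflect]
    apply Finset.sum_congr rfl
    intro i hi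
    rw [Finset.mem_range] at hi
    congr 1
    omega
  calc Ssum12 r n ≤ ∑ k ∈ Finset.Icc 1 n, aSeq12 r n * q ^ (n - k) := hsum
  _ = aSeq12 r n * ∑ k ∈ Finset.Icc 1 n, q ^ (n - k) := by rw [Finset.mul_sum]
  _ = aSeq12 r n * ∑ i ∈ Finset.range n, q ^ i := by rw [hre]
  _ ≤ aSeq12 r n * (1 - q)⁻¹ :=
      mul_le_mul_of_nonneg_left (geom_bound12 hq0.le hq1 n) (Real.exp_pos _).le
  _ = (1 - q)⁻¹ * aSeq12 r n := mul_comm _ _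

/-- For `0 < r < 1`, `S n / a n → ∞`. -/
lemma tendsto_ratio12 {r : ℝ} (hr : 0 < r) (hr1 : r < 1) :
    Tendsto (fun n => Ssum12 r n / aSeq12 r n) atTop atTop := by
  rw [tendsto_atTop]
  intro C
  obtain ⟨M, hM⟩ := exists_nat_ge (C * Real.exp 1)
  have h0 : Tendsto (fun m : ℕ => r * M * ((m:ℝ)) ^ (r - 1)) atTop (nhds 0) := by
    have h1 : Tendsto (fun x : ℝ => x ^ (r-1)) atTop (nhds 0) := by
      have := tendsto_rpow_neg_atTop (show 0 < 1 - r by linarith)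
      simpa [neg_sub] using this
    have h2 := ((h1.comp tendsto_natCast_atTop_atTop).const_mul (r * M))
    simpa using h2
  have h3 : ∀ᶠ m : ℕ in atTop, r * M * ((m:ℝ)) ^ (r-1) ≤ 1 :=
    h0.eventually_le_const one_pos
  obtain ⟨N₀, hN₀⟩ := eventually_atTop.1 h3
  rw [eventually_atTop]
  refine ⟨N₀ + 2*M + 2, fun n hn => ?_⟩
  have hk1 : 1 ≤ n - M := by omega
  have key : ∀ k ∈ Finset.Icc (n - M) n, aSeq12 r n * Real.exp (-1) ≤ aSeq12 r k := by
    intro k hk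
    rw [Finset.mem_Icc] at hk
    have hk1' : 1 ≤ k := le_trans hk1 hk.1
    have hb := key_lt12 hr hr1 k n hk1' hk.2
    have hnM0 : (0:ℝ) < ((n - M:ℕ):ℝ) := by exact_mod_cast (by omega : 0 < n - M)
    have hmono : (k:ℝ)^(r-1) ≤ ((n - M:ℕ):ℝ)^(r-1) :=
      Real.rpow_le_rpow_of_nonpos hnM0 (by exact_mod_cast hk.1) (by linarith)
    have hcard : ((n - k:ℕ):ℝ) ≤ (M:ℝ) := by exact_mod_cast (by omega : n - k ≤ M)
    have hbound : r * ((n-k:ℕ):ℝ) * (k:ℝ)^(r-1) ≤ r * M * ((n-M:ℕ):ℝ)^(r-1) := by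
      have hkpos : (0:ℝ) ≤ (k:ℝ)^(r-1) := Real.rpow_nonneg (by positivity) _
      have h4 : r * ((n-k:ℕ):ℝ) ≤ r * M := mul_le_mul_of_nonneg_left hcard hr.le
      have h5 : (0:ℝ) ≤ r * ((n-k:ℕ):ℝ) := by positivity
      exact mul_le_mul h4 hmono hkpos (by positivity)
    have h6 := hN₀ (n - M) (by omega)
    have h7 : (n:ℝ)^r ≤ (k:ℝ)^r + 1 := by linarith
    show aSeq12 r n * Real.exp (-1) ≤ aSeq12 r k
    rw [aSeq12, aSeq12, ← Real.exp_add]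
    exact Real.exp_le_exp.2 (by linarith)
  have hsub : Finset.Icc (n-M) n ⊆ Finset.Icc 1 n := by
    intro k hk
    rw [Finset.mem_Icc] at hk ⊢
    omega
  have hsum := Finset.card_nsmul_le_sum _ _ _ key
  have hcard : (Finset.Icc (n-M) n).card = M + 1 := by
    rw [Nat.card_Icc]; omega
  have hS : ∑ k ∈ Finset.Icc (n-M) n, aSeq12 r k ≤ Ssum12 r n :=
    Finset.sum_le_sum_of_subset_of_nonneg hsub (fun k _ _ => (Real.exp_pos _).le)
  have hA : 0 < aSeq12 r n := Real.exp_pos _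
  rw [le_div_iff₀ hA]
  have he : (0:ℝ) < Real.exp 1 := Real.exp_pos _
  have hinv : Real.exp 1 * (Real.exp 1)⁻¹ = 1 := mul_inv_cancel₀ (ne_of_gt he)
  have hCM : C ≤ (M:ℝ) * Real.exp (-1) := by
    rw [Real.exp_neg]
    nlinarith
  have hen : (0:ℝ) < Real.exp (-1) := Real.exp_pos _
  calc C * aSeq12 r n ≤ ((M:ℝ) + 1) * (aSeq12 r n * Real.exp (-1)) := by nlinarith
  _ = ((M+1 : ℕ) : ℝ) * (aSeq12 r n * Real.exp (-1)) := by push_cast; ring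
  _ = (Finset.Icc (n-M) n).card • (aSeq12 r n * Real.exp (-1)) := by
      rw [hcard, nsmul_eq_mul]
  _ ≤ ∑ k ∈ Finset.Icc (n-M) n, aSeq12 r k := hsum
  _ ≤ Ssum12 r n := hS

/-- For `r > 0`, the sequence `a_n = exp(n^r)` is slowly increasing
if and only if `r < 1`. -/
theorem stmt_12 (r : ℝ) (hr : 0 < r) :
    Tendsto (fun n : ℕ =>
        (∑ k ∈ Finset.Icc 1 n, (Real.exp ((k : ℝ) ^ r)) ^ 2) /
          (∑ k ∈ Finset.Icc 1 n, Real.exp ((k : ℝ) ^ r)) ^ 2)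
      atTop (nhds 0) ↔ r < 1 := by
  have hgoal : (fun n : ℕ =>
      (∑ k ∈ Finset.Icc 1 n, (Real.exp ((k : ℝ) ^ r)) ^ 2) /
        (∑ k ∈ Finset.Icc 1 n, Real.exp ((k : ℝ) ^ r)) ^ 2)
      = fun n => Qsum12 r n / (Ssum12 r n) ^ 2 := rfl
  rw [hgoal]
  have apos : ∀ k, 0 < aSeq12 r k := fun k => Real.exp_pos _
  have Spos : ∀ n, 1 ≤ n → 0 < Ssum12 r n := fun n hn =>
    Finset.sum_pos (fun k _ => apos k) ⟨n, Finset.mem_Icc.2 ⟨hn, le_refl n⟩⟩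
  have amono : ∀ {k n : ℕ}, k ≤ n → aSeq12 r k ≤ aSeq12 r n := by
    intro k n hkn
    exact Real.exp_le_exp.2
      (Real.rpow_le_rpow (Nat.cast_nonneg k) (Nat.cast_le.2 hkn) hr.le)
  constructor
  · intro h
    by_contra h1
    push_neg at h1
    set q : ℝ := Real.exp (-1) with hq
    have hq0 : 0 < q := Real.exp_pos _
    have hq1 : q < 1 := by
      rw [hq, show (1:ℝ) = Real.exp 0 by simp]
      exact Real.exp_lt_exp.2 (by norm_num)
    set c : ℝ := 1 - q with hc
    have hc0 : 0 < c := by rw [hc]; linarith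
    have hlow : ∀ n, 1 ≤ n → c ^ 2 ≤ Qsum12 r n / (Ssum12 r n) ^ 2 := by
      intro n hn
      have hS := Spos n hn
      have hSle := Sle12 h1 n hn
      have h2 : c * Ssum12 r n ≤ aSeq12 r n := by
        have := mul_le_mul_of_nonneg_left hSle hc0.le
        rwa [← mul_assoc, mul_inv_cancel₀ (ne_of_gt hc0), one_mul] at this
      have hQ : (aSeq12 r n) ^ 2 ≤ Qsum12 r n := by
        apply Finset.single_le_sum (f := fun k => (aSeq12 r k)^2)
          (fun k _ => sq_nonneg _) (Finset.mem_Icc.2 ⟨hn, le_refl n⟩)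
      rw [le_div_iff₀ (by positivity)]
      have h3 : (c * Ssum12 r n) ^ 2 ≤ (aSeq12 r n) ^ 2 :=
        pow_le_pow_left₀ (by positivity) h2 2
      calc c ^ 2 * Ssum12 r n ^ 2 = (c * Ssum12 r n) ^ 2 := by ring
      _ ≤ (aSeq12 r n) ^ 2 := h3
      _ ≤ Qsum12 r n := hQ
    have hev : ∀ᶠ n in atTop, c ^ 2 ≤ Qsum12 r n / (Ssum12 r n) ^ 2 :=
      eventually_atTop.2 ⟨1, hlow⟩
    have hlt : ∀ᶠ n in atTop, Qsum12 r n / (Ssum12 r n) ^ 2 < c ^ 2 :=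
      h.eventually_lt_const (by positivity)
    obtain ⟨n, h4, h5⟩ := (hev.and hlt).exists
    linarith
  · intro hr1
    have T := tendsto_ratio12 hr hr1
    have T2 : Tendsto (fun n => aSeq12 r n / Ssum12 r n) atTop (nhds 0) := by
      have h5 := T.inv_tendsto_atTop
      have h6 : (fun n => Ssum12 r n / aSeq12 r n)⁻¹ = fun n => aSeq12 r n / Ssum12 r n := by
        funext n; simp [Pi.inv_apply, inv_div]
      rwa [h6] at h5
    apply squeeze_zero' (f := fun n => Qsum12 r n / (Ssum12 r n) ^ 2)
      (g := fun n => aSeq12 r n / Ssum12 r n)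
    · filter_upwards with n
      apply div_nonneg _ (sq_nonneg _)
      exact Finset.sum_nonneg fun k _ => sq_nonneg _
    · filter_upwards [eventually_ge_atTop 1] with n hn
      have hS := Spos n hn
      have hQ : Qsum12 r n ≤ aSeq12 r n * Ssum12 r n := by
        rw [Qsum12, Ssum12, Finset.mul_sum]
        apply Finset.sum_le_sum
        intro k hk
        rw [Finset.mem_Icc] at hk
        have := amono hk.2
        have := (apos k).le
        nlinarith
      calc Qsum12 r n / (Ssum12 r n) ^ 2 ≤ (aSeq12 r n * Ssum12 r n) / (Ssum12 r n) ^ 2 := by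
            gcongr
      _ = aSeq12 r n / Ssum12 r n := by
            rw [sq, mul_div_mul_right _ _ (ne_of_gt hS)]
    · exact T2
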